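/- Let θ be a real random variable with distribution p(θ), and define the single-qubit channel E(ρ) = E_θ[ U_θ ρ U_θ† ] with U_θ = exp(iθX), where X is the Pauli X matrix. Let Δ = E[cos²θ − sin²θ] and t = E[cosθ sinθ], and assume Δ² + 4t² ≤ 1. Then there exists an angle φ and p̃ = (1 − √(Δ² + 4t²))/2 ∈ [0, 1/2] such that E = U_φ ∘ E_bitflip(p̃), where U_φ(ρ) = e^{iφX} ρ e^{−iφX} and E_bitflip(p̃)(ρ) = (1−p̃)ρ + p̃ XρX. -/

import Mathlib

open Matrix MeasureTheory

/-- The Pauli `X` matrix. -/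
noncomputable def pauliX : Matrix (Fin 2) (Fin 2) ℂ := !![0, 1; 1, 0]

/-- The rotation `U_θ = exp(iθX) = cos θ · I + i sin θ · X`. -/
noncomputable def Urot (θ : ℝ) : Matrix (Fin 2) (Fin 2) ℂ :=
  ((Real.cos θ : ℂ)) • (1 : Matrix (Fin 2) (Fin 2) ℂ) +
    (Complex.I * (Real.sin θ : ℂ)) • pauliX

lemma pauliX_conjT : pauliXᴴ = pauliX := by
  ext i j; fin_cases i <;> fin_cases j <;> simp [pauliX]

lemma pauliX_sq : pauliX * pauliX = 1 := by
  ext i j; fin_cases i <;> fin_cases j <;>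
    simp [pauliX, Matrix.mul_apply, Fin.sum_univ_two, Matrix.one_apply]

lemma XKX (ρ : Matrix (Fin 2) (Fin 2) ℂ) :
    pauliX * (pauliX * ρ * pauliX) * pauliX = ρ := by
  have h : pauliX * (pauliX * ρ * pauliX) * pauliX
      = (pauliX * pauliX) * ρ * (pauliX * pauliX) := by noncomm_ring
  rw [h, pauliX_sq, Matrix.one_mul, Matrix.mul_one]

lemma mulXX (ρ : Matrix (Fin 2) (Fin 2) ℂ) : ρ * pauliX * pauliX = ρ := by
  rw [Matrix.mul_assoc, pauliX_sq, Matrix.mul_one]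

lemma XXmul (ρ : Matrix (Fin 2) (Fin 2) ℂ) : pauliX * (pauliX * ρ) = ρ := by
  rw [← Matrix.mul_assoc, pauliX_sq, Matrix.one_mul]

lemma XK (ρ : Matrix (Fin 2) (Fin 2) ℂ) :
    pauliX * (pauliX * ρ * pauliX) = ρ * pauliX := by
  have h : pauliX * (pauliX * ρ * pauliX) = (pauliX * pauliX) * ρ * pauliX := by noncomm_ring
  rw [h, pauliX_sq, Matrix.one_mul]

lemma KX (ρ : Matrix (Fin 2) (Fin 2) ℂ) :
    (pauliX * ρ * pauliX) * pauliX = pauliX * ρ := by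
  have h : (pauliX * ρ * pauliX) * pauliX = pauliX * ρ * (pauliX * pauliX) := by noncomm_ring
  rw [h, pauliX_sq, Matrix.mul_one]

lemma expand2 (a b : ℂ) (X ρ : Matrix (Fin 2) (Fin 2) ℂ) :
    (a • (1:Matrix (Fin 2) (Fin 2) ℂ) + b • X) * ρ * (star a • 1 + star b • Xᴴ)
      = (a * star a) • ρ + (a * star b) • (ρ * Xᴴ) + (b * star a) • (X * ρ)
        + (b * star b) • (X * ρ * Xᴴ) := by
  simp only [Matrix.add_mul, Matrix.mul_add, Matrix.smul_mul, Matrix.mul_smul, smul_smul,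
    Matrix.one_mul, Matrix.mul_one]
  abel_nf
  module

lemma Urot_conj (θ : ℝ) (ρ : Matrix (Fin 2) (Fin 2) ℂ) :
    Urot θ * ρ * (Urot θ)ᴴ
      = ((Real.cos θ ^ 2 : ℝ) : ℂ) • ρ
        + ((Real.sin θ ^ 2 : ℝ) : ℂ) • (pauliX * ρ * pauliX)
        + ((Real.cos θ * Real.sin θ : ℝ) : ℂ) • (Complex.I • (pauliX * ρ - ρ * pauliX)) := by
  have h := expand2 (Real.cos θ : ℂ) (Complex.I * (Real.sin θ : ℂ)) pauliX ρ
  have hsa : star ((Real.cos θ : ℂ)) = (Real.cos θ : ℂ) := by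
    exact Complex.conj_ofReal _
  have hsb : star (Complex.I * (Real.sin θ : ℂ)) = -(Complex.I * (Real.sin θ : ℂ)) := by
    rw [StarMul.star_mul, Complex.star_def, Complex.conj_I, Complex.conj_ofReal]; ring
  rw [show (Urot θ)ᴴ = star ((Real.cos θ:ℂ)) • (1:Matrix (Fin 2) (Fin 2) ℂ)
      + star (Complex.I * (Real.sin θ:ℂ)) • pauliXᴴ by
    simp [Urot, Matrix.conjTranspose_add, Matrix.conjTranspose_smul]]
  rw [Urot, h, pauliX_conjT, hsa, hsb]
  simp only [mul_neg, neg_mul, smul_sub, smul_smul]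
  push_cast
  ring_nf
  rw [Complex.I_sq]
  module

/-- Proposition 3 (single-qubit core): the averaged coherent rotation channel
`ρ ↦ E_θ[U_θ ρ U_θᴴ]` equals a deterministic rotation `U_φ` composed with a
bit-flip channel of strength `p̃ = (1 - √(Δ² + 4t²))/2`. -/
theorem averaged_rotation_eq_rotation_comp_bitflip
    (μ : Measure ℝ) [IsProbabilityMeasure μ]
    (Δ t : ℝ)
    (hΔ : Δ = ∫ θ, (Real.cos θ ^ 2 - Real.sin θ ^ 2) ∂μ)
    (ht : t = ∫ θ, (Real.cos θ * Real.sin θ) ∂μ)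
    (hle : Δ ^ 2 + 4 * t ^ 2 ≤ 1) :
    ∃ φ : ℝ, ∀ ρ : Matrix (Fin 2) (Fin 2) ℂ,
      (fun i j => ∫ θ, (Urot θ * ρ * (Urot θ)ᴴ) i j ∂μ) =
        Urot φ *
          (((1 - (1 - Real.sqrt (Δ ^ 2 + 4 * t ^ 2)) / 2 : ℝ) : ℂ) • ρ +
            (((1 - Real.sqrt (Δ ^ 2 + 4 * t ^ 2)) / 2 : ℝ) : ℂ) • (pauliX * ρ * pauliX)) *
          (Urot φ)ᴴ := by
  -- integrability of the trig coefficients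
  have hbdd : ∀ f : ℝ → ℝ, Continuous f → (∀ x, |f x| ≤ 1) → Integrable f μ := by
    intro f hf hb
    refine (integrable_const (1:ℝ)).mono' hf.aestronglyMeasurable ?_
    filter_upwards with x
    simpa using hb x
  have hint1 : Integrable (fun θ => Real.cos θ ^ 2) μ := by
    refine hbdd _ (by continuity) fun x => ?_
    rw [abs_pow]
    exact pow_le_one₀ (abs_nonneg _) (Real.abs_cos_le_one x)
  have hint2 : Integrable (fun θ => Real.sin θ ^ 2) μ := by
    refine hbdd _ (by continuity) fun x => ?_
    rw [abs_pow]
    exact pow_le_one₀ (abs_nonneg _) (Real.abs_sin_le_one x)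
  have hint3 : Integrable (fun θ => Real.cos θ * Real.sin θ) μ := by
    refine hbdd _ (by continuity) fun x => ?_
    rw [abs_mul]
    exact mul_le_one₀ (Real.abs_cos_le_one x) (abs_nonneg _) (Real.abs_sin_le_one x)
  set c2 : ℝ := ∫ θ, Real.cos θ ^ 2 ∂μ with hc2def
  set s2 : ℝ := ∫ θ, Real.sin θ ^ 2 ∂μ with hs2def
  have hsum : c2 + s2 = 1 := by
    rw [hc2def, hs2def, ← integral_add hint1 hint2]
    simp [Real.cos_sq_add_sin_sq]
  have hdiff : c2 - s2 = Δ := by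
    rw [hc2def, hs2def, ← integral_sub hint1 hint2, hΔ]
  set r : ℝ := Real.sqrt (Δ ^ 2 + 4 * t ^ 2) with hrdef
  set p : ℝ := (1 - r) / 2 with hpdef
  -- choose the angle
  set z : ℂ := ⟨Δ, 2 * t⟩ with hzdef
  refine ⟨z.arg / 2, fun ρ => ?_⟩
  set φ : ℝ := z.arg / 2 with hφdef
  have habs : ‖z‖ = r := by
    rw [Complex.norm_def, hrdef]
    congr 1
    simp only [Complex.normSq_apply, hzdef]
    ring
  have hz0 : z = 0 → Δ = 0 ∧ t = 0 := by
    intro hz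
    constructor
    · have := congrArg Complex.re hz; simpa [hzdef] using this
    · have := congrArg Complex.im hz
      simp [hzdef] at this
      linarith
  have pyth : Real.sin φ ^ 2 + Real.cos φ ^ 2 = 1 := Real.sin_sq_add_cos_sq φ
  have h2φ : 2 * φ = z.arg := by rw [hφdef]; ring
  have hcosΔ : r * (Real.cos φ ^ 2 - Real.sin φ ^ 2) = Δ := by
    have hc2φ : Real.cos z.arg = Real.cos φ ^ 2 - Real.sin φ ^ 2 := by
      rw [← h2φ, Real.cos_two_mul]
      linarith
    by_cases hz : z = 0
    · obtain ⟨h1, h2⟩ := hz0 hz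
      simp [hrdef, h1, h2]
    · have hr0 : r ≠ 0 := by rw [← habs]; simpa using hz
      rw [← hc2φ, Complex.cos_arg hz, habs]
      field_simp [hzdef]
      simp [hzdef]
  have hsint : r * (2 * Real.sin φ * Real.cos φ) = 2 * t := by
    have hs2φ : Real.sin z.arg = 2 * Real.sin φ * Real.cos φ := by
      rw [← h2φ, Real.sin_two_mul]
    by_cases hz : z = 0
    · obtain ⟨h1, h2⟩ := hz0 hz
      simp [hrdef, h1, h2]
    · have hr0 : r ≠ 0 := by rw [← habs]; simpa using hz
      rw [← hs2φ, Complex.sin_arg z, habs]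
      field_simp [hzdef]
      simp [hzdef]
  -- complex coefficient identities
  have e1 : ((Real.cos φ ^ 2 : ℝ) : ℂ) * (1 - ((1 - r) / 2 : ℝ))
      + ((Real.sin φ ^ 2 : ℝ) : ℂ) * (((1 - r) / 2 : ℝ)) = ((c2 : ℝ) : ℂ) := by
    have : Real.cos φ ^ 2 * (1 - (1 - r) / 2) + Real.sin φ ^ 2 * ((1 - r) / 2) = c2 := by
      have hc2v : c2 = (1 + Δ) / 2 := by linarith
      rw [hc2v]
      linear_combination (1/2) * hcosΔ + (1/2) * pyth
    exact_mod_cast this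
  have e2 : ((Real.cos φ ^ 2 : ℝ) : ℂ) * (((1 - r) / 2 : ℝ))
      + ((Real.sin φ ^ 2 : ℝ) : ℂ) * (1 - ((1 - r) / 2 : ℝ)) = ((s2 : ℝ) : ℂ) := by
    have : Real.cos φ ^ 2 * ((1 - r) / 2) + Real.sin φ ^ 2 * (1 - (1 - r) / 2) = s2 := by
      have hs2v : s2 = (1 - Δ) / 2 := by linarith
      rw [hs2v]
      linear_combination (-1/2) * hcosΔ + (1/2) * pyth
    exact_mod_cast this
  have e3 : ((Real.cos φ * Real.sin φ : ℝ) : ℂ) * (1 - 2 * ((1 - r) / 2 : ℝ)) = ((t : ℝ) : ℂ) := by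
    have : Real.cos φ * Real.sin φ * (1 - 2 * ((1 - r) / 2)) = t := by
      linear_combination (1/2) * hsint
    exact_mod_cast this
  -- the key matrix identity
  have key : ((c2 : ℝ) : ℂ) • ρ + ((s2 : ℝ) : ℂ) • (pauliX * ρ * pauliX)
        + ((t : ℝ) : ℂ) • (Complex.I • (pauliX * ρ - ρ * pauliX))
      = Urot φ *
          (((1 - (1 - r) / 2 : ℝ) : ℂ) • ρ +
            (((1 - r) / 2 : ℝ) : ℂ) • (pauliX * ρ * pauliX)) *
          (Urot φ)ᴴ := by
    rw [Urot_conj]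
    simp only [Matrix.mul_add, Matrix.add_mul, Matrix.mul_smul, Matrix.smul_mul,
      XKX, XK, KX, mulXX, XXmul, smul_add, smul_sub, smul_smul]
    match_scalars
    · push_cast at e1 ⊢
      linear_combination -e1
    · push_cast at e2 ⊢
      linear_combination -e2
    · push_cast at e3 ⊢
      linear_combination -Complex.I * e3
    · push_cast at e3 ⊢
      linear_combination Complex.I * e3
  -- entrywise computation of the integral
  funext i j
  rw [← key]
  have hint1' := (hint1.smul_const (ρ i j))
  have hint2' := (hint2.smul_const ((pauliX * ρ * pauliX) i j))
  have hint3' := (hint3.smul_const ((Complex.I • (pauliX * ρ - ρ * pauliX)) i j))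
  calc ∫ θ, (Urot θ * ρ * (Urot θ)ᴴ) i j ∂μ
      = ∫ θ, (Real.cos θ ^ 2 • ρ i j + Real.sin θ ^ 2 • (pauliX * ρ * pauliX) i j
          + (Real.cos θ * Real.sin θ) • (Complex.I • (pauliX * ρ - ρ * pauliX)) i j) ∂μ := by
        congr 1
        funext θ
        rw [Urot_conj]
        simp only [Matrix.add_apply, Matrix.smul_apply, smul_eq_mul, ← Complex.real_smul]
    _ = c2 • ρ i j + s2 • (pauliX * ρ * pauliX) i j
          + t • (Complex.I • (pauliX * ρ - ρ * pauliX)) i j := by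
        have h12 : Integrable (fun θ => Real.cos θ ^ 2 • ρ i j
            + Real.sin θ ^ 2 • (pauliX * ρ * pauliX) i j) μ := hint1'.add hint2'
        rw [integral_add h12 hint3', integral_add hint1' hint2', integral_smul_const,
          integral_smul_const, integral_smul_const, ← hc2def, ← hs2def, ← ht]
    _ = (((c2 : ℝ) : ℂ) • ρ + ((s2 : ℝ) : ℂ) • (pauliX * ρ * pauliX)
          + ((t : ℝ) : ℂ) • (Complex.I • (pauliX * ρ - ρ * pauliX))) i j := by
        simp only [Matrix.add_apply, Matrix.smul_apply, smul_eq_mul, ← Complex.real_smul]
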